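/- Let G be a cubic simple graph with girth at least 16, let A be a MAI set of G, let B = V(G) \ A, let Y be the set of vertices of degree 1 in G[A], and let Z be the set of vertices of degree 1 in G[B]. Let J be the set of edges of G with one endpoint in Y and the other endpoint in Z (J is a matching in G). Let H be the auxiliary graph with vertex set J in which two edges yz, y′z′ ∈ J (with y, y′ ∈ Y and z, z′ ∈ Z) are adjacent if and only if yy′ ∈ E(G) or zz′ ∈ E(G). Then the number of distinct MAI sets of G is at least I(H), the number of independent sets of H (including the empty set). -/

import Mathlib

/-- A set of vertices is independent if its vertices are pairwise nonadjacent. -/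
def IsIndep {V : Type*} (G : SimpleGraph V) (s : Set V) : Prop :=
  s.Pairwise fun u v => ¬ G.Adj u v

/-- The independence number of a graph: the largest size of an independent set. -/
noncomputable def indepNum {V : Type*} (G : SimpleGraph V) : ℕ :=
  sSup {n | ∃ s : Set V, IsIndep G s ∧ s.ncard = n}

/-- A graph is cubic (3-regular) if every vertex has exactly three neighbors. -/
def IsCubic {V : Type*} (G : SimpleGraph V) : Prop :=
  ∀ v : V, (G.neighborSet v).ncard = 3

/-- `A` is an AI set (almost independent set) if the subgraph induced by `A` has maximum
degree at most 1, i.e. every vertex of `A` has at most one neighbor inside `A`. -/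
def IsAI {V : Type*} (G : SimpleGraph V) (A : Set V) : Prop :=
  ∀ a ∈ A, ({b | b ∈ A ∧ G.Adj a b}).ncard ≤ 1

/-- `A` is a MAI set (maximum almost independent set) if `A` is an AI set containing an
independent set of maximum size `α(G)`, and `A` is largest among such sets. -/
def IsMAI {V : Type*} (G : SimpleGraph V) (A : Set V) : Prop :=
  IsAI G A ∧ (∃ s ⊆ A, IsIndep G s ∧ s.ncard = indepNum G) ∧
    ∀ A' : Set V, IsAI G A' → (∃ s ⊆ A', IsIndep G s ∧ s.ncard = indepNum G) →
      A'.ncard ≤ A.ncard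

section Aux

variable {V : Type*} [Fintype V] {G : SimpleGraph V} {A : Set V}

lemma indep_le {s : Set V} (hs : IsIndep G s) : s.ncard ≤ indepNum G := by
  refine le_csSup ⟨Fintype.card V, ?_⟩ ⟨s, hs, rfl⟩
  rintro n ⟨t, _, rfl⟩
  simpa [Set.ncard_univ] using Set.ncard_le_ncard (Set.subset_univ t) Set.finite_univ

lemma not_indep_big {s : Set V} {a : V} (hs : IsIndep G s) (hcard : s.ncard = indepNum G)
    (ha : a ∉ s) (hadj : ∀ b ∈ s, ¬ G.Adj a b) : False := by
  have hsymm : Symmetric fun u v : V => ¬ G.Adj u v := fun u v h h' => h h'.symm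
  have hi : IsIndep G (insert a s) :=
    (haveI : Std.Symm fun u v : V => ¬ G.Adj u v := ⟨hsymm⟩; Set.pairwise_insert_of_symm (r := fun u v : V => ¬ G.Adj u v)).mpr ⟨hs, fun b hb _ => hadj b hb⟩
  have := indep_le hi
  rw [Set.ncard_insert_of_notMem ha (Set.toFinite s)] at this
  omega

lemma nb_subsingleton (hAI : IsAI G A) {b : V} (hb : b ∈ A) :
    ∀ x ∈ {c | c ∈ A ∧ G.Adj b c}, ∀ x' ∈ {c | c ∈ A ∧ G.Adj b c}, x = x' := by
  intro x hx x' hx'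
  by_contra hne
  have h2 : 1 < ({c | c ∈ A ∧ G.Adj b c}).ncard :=
    Set.one_lt_ncard_iff (Set.toFinite _) |>.mpr ⟨x, x', hx, hx', hne⟩
  have := hAI b hb
  omega

/-- The swap lemma: given a set `F` of pairwise nonadjacent degree-one vertices of `G[A]`,
there is a maximum independent subset of `A` avoiding `F` and containing all isolated
vertices of `G[A]`. -/
lemma swap (hA : IsMAI G A) (F : Set V)
    (hFY : ∀ y ∈ F, y ∈ A ∧ ({b | b ∈ A ∧ G.Adj y b}).ncard = 1)
    (hFnadj : ∀ y ∈ F, ∀ y' ∈ F, ¬ G.Adj y y') :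
    ∃ s ⊆ A, IsIndep G s ∧ s.ncard = indepNum G ∧ s ∩ F = ∅ ∧
      ∀ a ∈ A, ({b | b ∈ A ∧ G.Adj a b}).ncard ≠ 1 → a ∈ s := by
  obtain ⟨hAI, ⟨s₀, hs₀A, hs₀i, hs₀c⟩, _⟩ := hA
  have hpex : ∀ y : V, ∃ b, y ∈ A → ({b' | b' ∈ A ∧ G.Adj y b'}).ncard = 1 →
      {b' | b' ∈ A ∧ G.Adj y b'} = {b} := by
    intro y
    by_cases hy : y ∈ A ∧ ({b' | b' ∈ A ∧ G.Adj y b'}).ncard = 1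
    · obtain ⟨b, hb⟩ := Set.ncard_eq_one.mp hy.2
      exact ⟨b, fun _ _ => hb⟩
    · exact ⟨y, fun h1 h2 => absurd ⟨h1, h2⟩ hy⟩
  choose p hp using hpex
  have hpmem : ∀ y, y ∈ A → ({b' | b' ∈ A ∧ G.Adj y b'}).ncard = 1 →
      p y ∈ A ∧ G.Adj y (p y) := by
    intro y h1 h2
    have := hp y h1 h2
    have : p y ∈ {b' | b' ∈ A ∧ G.Adj y b'} := this ▸ rfl
    exact this
  -- isolated vertices are in s₀
  have hIso : ∀ a ∈ A, ({b | b ∈ A ∧ G.Adj a b}).ncard ≠ 1 → a ∈ s₀ := by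
    intro a haA hnot
    have h0 : ({b | b ∈ A ∧ G.Adj a b}).ncard = 0 := by have := hAI a haA; omega
    have hempty : {b | b ∈ A ∧ G.Adj a b} = ∅ :=
      (Set.ncard_eq_zero (Set.toFinite _)).mp h0
    by_contra hns
    exact not_indep_big hs₀i hs₀c hns fun b hb hadj =>
      (Set.eq_empty_iff_forall_notMem.mp hempty b) ⟨hs₀A hb, hadj⟩
  have hPartner : ∀ y, y ∈ A → ({b | b ∈ A ∧ G.Adj y b}).ncard = 1 → y ∉ s₀ → p y ∈ s₀ := by
    intro y h1 h2 hns
    by_contra hnp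
    refine not_indep_big hs₀i hs₀c hns fun b hb hadj => ?_
    have : b ∈ {b' | b' ∈ A ∧ G.Adj y b'} := ⟨hs₀A hb, hadj⟩
    rw [hp y h1 h2] at this
    exact hnp (this ▸ hb)
  have hNotBoth : ∀ y, y ∈ A → ({b | b ∈ A ∧ G.Adj y b}).ncard = 1 → y ∈ s₀ → p y ∉ s₀ := by
    intro y h1 h2 hys hps
    have hadj := (hpmem y h1 h2).2
    exact hs₀i hys hps hadj.ne hadj
  refine ⟨(s₀ \ F) ∪ (p '' (F ∩ s₀)), ?_, ?_, ?_, ?_, ?_⟩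
  · rintro x (⟨hx, -⟩ | ⟨y, hy, rfl⟩)
    · exact hs₀A hx
    · exact (hpmem y (hFY y hy.1).1 (hFY y hy.1).2).1
  · -- independence
    intro x hx x' hx' hne hadj
    rcases hx with ⟨hxs, hxF⟩ | ⟨y, hy, rfl⟩
    · have hxA := hs₀A hxs
      by_cases hxY : ({b | b ∈ A ∧ G.Adj x b}).ncard = 1
      · have hx'A : x' ∈ A := by
          rcases hx' with ⟨h, -⟩ | ⟨y', hy', rfl⟩
          · exact hs₀A h
          · exact (hpmem y' (hFY y' hy'.1).1 (hFY y' hy'.1).2).1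
        have hx'p : x' = p x := by
          have : x' ∈ {b | b ∈ A ∧ G.Adj x b} := ⟨hx'A, hadj⟩
          rw [hp x hxA hxY] at this; exact this
        rcases hx' with ⟨h, -⟩ | ⟨y', hy', hpy'⟩
        · exact hNotBoth x hxA hxY hxs (hx'p ▸ h)
        · -- p x = p y'
          have hy'Y := hFY y' hy'.1
          have h1 : x ∈ {b | b ∈ A ∧ G.Adj (p x) b} :=
            ⟨hxA, ((hpmem x hxA hxY).2).symm⟩
          have h2 : y' ∈ {b | b ∈ A ∧ G.Adj (p x) b} := by
            refine ⟨hy'Y.1, ?_⟩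
            have := (hpmem y' hy'Y.1 hy'Y.2).2
            rw [hpy', hx'p] at this
            exact this.symm
          have := nb_subsingleton hAI (hpmem x hxA hxY).1 x h1 y' h2
          exact hxF (this ▸ hy'.1)
      · have hempty : {b | b ∈ A ∧ G.Adj x b} = ∅ :=
          (Set.ncard_eq_zero (Set.toFinite _)).mp (by have := hAI x hxA; omega)
        have hx'A : x' ∈ A := by
          rcases hx' with ⟨h, -⟩ | ⟨y', hy', rfl⟩
          · exact hs₀A h
          · exact (hpmem y' (hFY y' hy'.1).1 (hFY y' hy'.1).2).1
        exact (Set.eq_empty_iff_forall_notMem.mp hempty x') ⟨hx'A, hadj⟩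
    · -- x = p y
      have hyY := hFY y hy.1
      have hx'A : x' ∈ A := by
        rcases hx' with ⟨h, -⟩ | ⟨y', hy', rfl⟩
        · exact hs₀A h
        · exact (hpmem y' (hFY y' hy'.1).1 (hFY y' hy'.1).2).1
      have hx'y : x' = y := by
        refine nb_subsingleton hAI (hpmem y hyY.1 hyY.2).1 x' ⟨hx'A, hadj⟩ y
          ⟨hyY.1, ((hpmem y hyY.1 hyY.2).2).symm⟩
      rcases hx' with ⟨-, hF⟩ | ⟨y', hy', hpy'⟩
      · exact hF (hx'y ▸ hy.1)
      · -- y = p y', both y y' ∈ F, adjacent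
        have hy'Y := hFY y' hy'.1
        have : G.Adj y' y := by
          have := (hpmem y' hy'Y.1 hy'Y.2).2
          rw [hpy', hx'y] at this; exact this
        exact hFnadj y' hy'.1 y hy.1 this
  · -- cardinality
    have hdisj : Disjoint (s₀ \ F) (p '' (F ∩ s₀)) := by
      rw [Set.disjoint_left]
      rintro x ⟨hxs, -⟩ ⟨y, hy, rfl⟩
      exact hNotBoth y (hFY y hy.1).1 (hFY y hy.1).2 hy.2 hxs
    have hinj : Set.InjOn p (F ∩ s₀) := by
      intro y hy y' hy' heq
      have hyY := hFY y hy.1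
      have hy'Y := hFY y' hy'.1
      refine nb_subsingleton hAI (hpmem y hyY.1 hyY.2).1 y
        ⟨hyY.1, ((hpmem y hyY.1 hyY.2).2).symm⟩ y' ⟨hy'Y.1, ?_⟩
      have := (hpmem y' hy'Y.1 hy'Y.2).2
      rw [← heq] at this; exact this.symm
    rw [Set.ncard_union_eq hdisj (Set.toFinite _) (Set.toFinite _),
      Set.ncard_image_of_injOn hinj]
    have h1 : s₀ \ F = s₀ \ (F ∩ s₀) := Set.diff_inter_self_eq_diff.symm
    rw [h1, Set.ncard_diff Set.inter_subset_right (Set.toFinite _)]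
    have h2 : (F ∩ s₀).ncard ≤ s₀.ncard :=
      Set.ncard_le_ncard Set.inter_subset_right (Set.toFinite _)
    omega
  · -- disjoint from F
    rw [Set.eq_empty_iff_forall_notMem]
    rintro x ⟨(⟨-, hxF⟩ | ⟨y, hy, rfl⟩), hF⟩
    · exact hxF hF
    · exact hFnadj y hy.1 (p y) hF (hpmem y (hFY y hy.1).1 (hFY y hy.1).2).2
  · -- isolated vertices
    intro a haA hnot
    exact Or.inl ⟨hIso a haA hnot, fun hF => hnot (hFY a hF).2⟩
open SimpleGraph

set_option linter.unusedSectionVars false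

lemma cycFalse (h : 16 ≤ G.egirth) {a : V} (w : G.Walk a a) (hc : w.IsCycle)
    (hl : w.length ≤ 5) : False := by
  have := le_egirth.mp h a w hc
  have : (16:ℕ∞) ≤ 5 := this.trans (by exact_mod_cast Nat.cast_le.mpr hl)
  norm_num at this

lemma noTriangle (h : 16 ≤ G.egirth) {a b c : V} (h1 : G.Adj a b) (h2 : G.Adj b c)
    (h3 : G.Adj c a) : False := by
  have hab := h1.ne
  have hbc := h2.ne
  have hca := h3.ne
  refine cycFalse h (.cons h1 (.cons h2 (.cons h3 .nil))) ?_ (by simp)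
  simp_all [Walk.isCycle_def, Walk.isTrail_def, List.Nodup, Sym2.eq, Sym2.rel_iff', Ne.symm]

lemma noC4 (h : 16 ≤ G.egirth) {a b c d : V} (h1 : G.Adj a b) (h2 : G.Adj b c)
    (h3 : G.Adj c d) (h4 : G.Adj d a) (hac : a ≠ c) (hbd : b ≠ d) : False := by
  have hab := h1.ne
  have hbc := h2.ne
  have hcd := h3.ne
  have hda := h4.ne
  refine cycFalse h (.cons h1 (.cons h2 (.cons h3 (.cons h4 .nil)))) ?_ (by simp)
  simp_all [Walk.isCycle_def, Walk.isTrail_def, List.Nodup, Sym2.eq, Sym2.rel_iff', Ne.symm]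

lemma noC5 (h : 16 ≤ G.egirth) {a b c d e : V} (h1 : G.Adj a b) (h2 : G.Adj b c)
    (h3 : G.Adj c d) (h4 : G.Adj d e) (h5 : G.Adj e a)
    (hac : a ≠ c) (had : a ≠ d) (hbd : b ≠ d) (hbe : b ≠ e) (hce : c ≠ e) : False := by
  have hab := h1.ne
  have hbc := h2.ne
  have hcd := h3.ne
  have hde := h4.ne
  have hea := h5.ne
  refine cycFalse h (.cons h1 (.cons h2 (.cons h3 (.cons h4 (.cons h5 .nil))))) ?_ (by simp)
  simp_all [Walk.isCycle_def, Walk.isTrail_def, List.Nodup, Sym2.eq, Sym2.rel_iff', Ne.symm]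
lemma ncard_le_one_of_subset_singleton {s : Set V} {w : V} (h : s ⊆ {w}) : s.ncard ≤ 1 :=
  le_trans (Set.ncard_le_ncard h (Set.finite_singleton w)) (by simp)

lemma pair_other {s : Set V} (h2 : s.ncard = 2) {y : V} (hy : y ∈ s) :
    ∃ w, w ∈ s ∧ w ≠ y ∧ s = {y, w} := by
  obtain ⟨u, v, huv, rfl⟩ := Set.ncard_eq_two.mp h2
  rcases hy with rfl | rfl
  · exact ⟨v, by simp, fun h => huv h.symm, rfl⟩
  · exact ⟨u, by simp, huv, by ext; simp; tauto⟩

lemma deg_split (hcubic : IsCubic G) (A : Set V) (v : V) :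
    ({b | b ∈ A ∧ G.Adj v b}).ncard + ({b | b ∈ Aᶜ ∧ G.Adj v b}).ncard = 3 := by
  rw [← hcubic v]
  rw [← Set.ncard_union_eq ?_ (Set.toFinite _) (Set.toFinite _)]
  · congr 1
    ext b
    simp only [Set.mem_union, Set.mem_setOf_eq, SimpleGraph.mem_neighborSet, Set.mem_compl_iff]
    tauto
  · rw [Set.disjoint_left]
    rintro b ⟨hb, -⟩ ⟨hb', -⟩
    exact hb' hb

lemma iso_empty (hAI : IsAI G A) {w : V} (hw : w ∈ A)
    (h : ({b | b ∈ A ∧ G.Adj w b}).ncard ≠ 1) : ∀ b ∈ A, ¬ G.Adj w b := by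
  have h0 : ({b | b ∈ A ∧ G.Adj w b}).ncard = 0 := by have := hAI w hw; omega
  have hempty : {b | b ∈ A ∧ G.Adj w b} = ∅ := (Set.ncard_eq_zero (Set.toFinite _)).mp h0
  intro b hb hadj
  exact (Set.eq_empty_iff_forall_notMem.mp hempty b) ⟨hb, hadj⟩

/-- For `z ∈ Z`, the set of neighbours of `z` in `A` has exactly two elements. -/
lemma z_two (hcubic : IsCubic G) {z : V} (hz1 : ({b | b ∈ Aᶜ ∧ G.Adj z b}).ncard = 1) :
    ({b | b ∈ A ∧ G.Adj z b}).ncard = 2 := by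
  have := deg_split hcubic A z
  omega

/-- Statement: the second `A`-neighbour of a `Z`-vertex matched to a `Y`-vertex is isolated
in `G[A]`. -/
lemma C1 (hgirth : 16 ≤ G.egirth) (hcubic : IsCubic G) (hA : IsMAI G A) {y z w : V}
    (hyA : y ∈ A) (hy1 : ({b | b ∈ A ∧ G.Adj y b}).ncard = 1)
    (hzB : z ∈ Aᶜ) (hz1 : ({b | b ∈ Aᶜ ∧ G.Adj z b}).ncard = 1)
    (hadj : G.Adj y z) (hwA : w ∈ A) (hzw : G.Adj z w) (hwy : w ≠ y) :
    ({b | b ∈ A ∧ G.Adj w b}).ncard ≠ 1 := by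
  intro hw1
  have hnyw : ¬ G.Adj y w := fun h => noTriangle hgirth h hzw.symm hadj.symm
  obtain ⟨s, hsA, hsi, hsc, hsF, -⟩ := swap hA {y, w}
    (by rintro x (rfl | rfl); exacts [⟨hyA, hy1⟩, ⟨hwA, hw1⟩])
    (by rintro x (rfl | rfl) x' (rfl | rfl) h <;>
      first | exact G.irrefl h | exact hnyw h | exact hnyw h.symm)
  have hzpair : {b | b ∈ A ∧ G.Adj z b} = {y, w} := by
    obtain ⟨w', hw', hw'y, hpair⟩ := pair_other (z_two hcubic hz1) (⟨hyA, hadj.symm⟩ :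
      y ∈ {b | b ∈ A ∧ G.Adj z b})
    have : w ∈ {b | b ∈ A ∧ G.Adj z b} := ⟨hwA, hzw⟩
    rw [hpair] at this
    rcases this with rfl | rfl
    · exact absurd rfl hwy
    · exact hpair
  refine not_indep_big hsi hsc (fun hzs => hzB (hsA hzs)) fun b hb hadjb => ?_
  have : b ∈ {b | b ∈ A ∧ G.Adj z b} := ⟨hsA hb, hadjb⟩
  rw [hzpair] at this
  exact Set.eq_empty_iff_forall_notMem.mp hsF b ⟨hb, this⟩

/-- Statement: no two edges of `J` share their `Y`-endpoint. -/
lemma C2a (hgirth : 16 ≤ G.egirth) (hcubic : IsCubic G) (hA : IsMAI G A) {y z z' : V}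
    (hyA : y ∈ A) (hy1 : ({b | b ∈ A ∧ G.Adj y b}).ncard = 1)
    (hzB : z ∈ Aᶜ) (hz1 : ({b | b ∈ Aᶜ ∧ G.Adj z b}).ncard = 1)
    (hz'B : z' ∈ Aᶜ) (hz'1 : ({b | b ∈ Aᶜ ∧ G.Adj z' b}).ncard = 1)
    (h1 : G.Adj y z) (h2 : G.Adj y z') (hne : z ≠ z') : False := by
  obtain ⟨w, hwmem, hwy, hzpair⟩ := pair_other (z_two hcubic hz1) (⟨hyA, h1.symm⟩ :
    y ∈ {b | b ∈ A ∧ G.Adj z b})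
  obtain ⟨hwA, hzw⟩ := hwmem
  obtain ⟨w', hw'mem, hw'y, hz'pair⟩ := pair_other (z_two hcubic hz'1) (⟨hyA, h2.symm⟩ :
    y ∈ {b | b ∈ A ∧ G.Adj z' b})
  obtain ⟨hw'A, hz'w'⟩ := hw'mem
  have hwiso := iso_empty hA.1 hwA (C1 hgirth hcubic hA hyA hy1 hzB hz1 h1 hwA hzw hwy)
  have hw'iso := iso_empty hA.1 hw'A (C1 hgirth hcubic hA hyA hy1 hz'B hz'1 h2 hw'A hz'w' hw'y)
  have hnzz' : ¬ G.Adj z z' := fun h => noTriangle hgirth h1 h h2.symm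
  have hww' : w ≠ w' := by
    rintro rfl
    exact noC4 hgirth h1 hzw hz'w'.symm h2.symm (Ne.symm hwy) hne
  -- the modified set
  set A' : Set V := insert z (insert z' (A \ {y})) with hA'
  have hsubz : {b | b ∈ A' ∧ G.Adj z b} ⊆ {w} := by
    rintro b ⟨hb, hadjb⟩
    rcases hb with rfl | rfl | ⟨hbA, hby⟩
    · exact absurd hadjb (G.irrefl)
    · exact absurd hadjb hnzz'
    · have : b ∈ {c | c ∈ A ∧ G.Adj z c} := ⟨hbA, hadjb⟩
      rw [hzpair] at this
      rcases this with rfl | rfl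
      · exact absurd rfl hby
      · rfl
  have hsubz' : {b | b ∈ A' ∧ G.Adj z' b} ⊆ {w'} := by
    rintro b ⟨hb, hadjb⟩
    rcases hb with rfl | rfl | ⟨hbA, hby⟩
    · exact absurd hadjb (fun h => hnzz' h.symm)
    · exact absurd hadjb (G.irrefl)
    · have : b ∈ {c | c ∈ A ∧ G.Adj z' c} := ⟨hbA, hadjb⟩
      rw [hz'pair] at this
      rcases this with rfl | rfl
      · exact absurd rfl hby
      · rfl
  have hsubw : {b | b ∈ A' ∧ G.Adj w b} ⊆ {z} := by
    rintro b ⟨hb, hadjb⟩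
    rcases hb with rfl | rfl | ⟨hbA, hby⟩
    · rfl
    · have : w ∈ {c | c ∈ A ∧ G.Adj b c} := ⟨hwA, hadjb.symm⟩
      rw [hz'pair] at this
      rcases this with h | h
      · exact absurd h (Ne.symm hwy).symm
      · exact absurd h hww'
    · exact absurd hadjb (hwiso b hbA)
  have hsubw' : {b | b ∈ A' ∧ G.Adj w' b} ⊆ {z'} := by
    rintro b ⟨hb, hadjb⟩
    rcases hb with rfl | rfl | ⟨hbA, hby⟩
    · have : w' ∈ {c | c ∈ A ∧ G.Adj b c} := ⟨hw'A, hadjb.symm⟩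
      rw [hzpair] at this
      rcases this with h | h
      · exact absurd h hw'y
      · exact absurd h (Ne.symm hww')
    · rfl
    · exact absurd hadjb (hw'iso b hbA)
  have hgen : ∀ a, a ∈ A → a ≠ y → a ≠ w → a ≠ w' →
      {b | b ∈ A' ∧ G.Adj a b} ⊆ {b | b ∈ A ∧ G.Adj a b} := by
    intro a haA hay haw haw'
    rintro b ⟨hb, hadjb⟩
    rcases hb with rfl | rfl | ⟨hbA, hby⟩
    · have : a ∈ {c | c ∈ A ∧ G.Adj b c} := ⟨haA, hadjb.symm⟩
      rw [hzpair] at this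
      rcases this with h | h
      · exact absurd h hay
      · exact absurd h haw
    · have : a ∈ {c | c ∈ A ∧ G.Adj b c} := ⟨haA, hadjb.symm⟩
      rw [hz'pair] at this
      rcases this with h | h
      · exact absurd h hay
      · exact absurd h haw'
    · exact ⟨hbA, hadjb⟩
  have hA'AI : IsAI G A' := by
    intro a ha
    rcases ha with rfl | rfl | ⟨haA, hay⟩
    · exact ncard_le_one_of_subset_singleton hsubz
    · exact ncard_le_one_of_subset_singleton hsubz'
    · by_cases haw : a = w
      · subst haw; exact ncard_le_one_of_subset_singleton hsubw
      · by_cases haw' : a = w'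
        · subst haw'; exact ncard_le_one_of_subset_singleton hsubw'
        · exact le_trans (Set.ncard_le_ncard
            (hgen a haA (by simpa using hay) haw haw') (Set.toFinite _)) (hA.1 a haA)
  -- a maximum independent set inside A'
  obtain ⟨s, hsA, hsi, hsc, hsF, -⟩ := swap hA {y}
    (by rintro x rfl; exact ⟨hyA, hy1⟩)
    (by rintro x rfl x' rfl h; exact G.irrefl h)
  have hsA' : s ⊆ A' := by
    intro x hx
    refine Or.inr (Or.inr ⟨hsA hx, fun hxy => ?_⟩)
    exact Set.eq_empty_iff_forall_notMem.mp hsF x ⟨hx, hxy⟩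
  have hle := hA.2.2 A' hA'AI ⟨s, hsA', hsi, hsc⟩
  have hz'nm : z' ∉ A \ {y} := fun h => hz'B h.1
  have hznm : z ∉ insert z' (A \ {y}) := by
    rintro (rfl | h)
    · exact hne rfl
    · exact hzB h.1
  rw [hA', Set.ncard_insert_of_notMem hznm (Set.toFinite _),
    Set.ncard_insert_of_notMem hz'nm (Set.toFinite _)] at hle
  have := Set.ncard_diff_singleton_add_one hyA (Set.toFinite A)
  omega

/-- Statement: two matched `Z`-vertices cannot share their isolated second `A`-neighbour. -/
lemma C3 (hgirth : 16 ≤ G.egirth) (hcubic : IsCubic G) (hA : IsMAI G A) {y y' z z' a : V}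
    (hyA : y ∈ A) (hy1 : ({b | b ∈ A ∧ G.Adj y b}).ncard = 1)
    (hy'A : y' ∈ A) (hy'1 : ({b | b ∈ A ∧ G.Adj y' b}).ncard = 1)
    (hzB : z ∈ Aᶜ) (hz1 : ({b | b ∈ Aᶜ ∧ G.Adj z b}).ncard = 1)
    (hz'B : z' ∈ Aᶜ) (hz'1 : ({b | b ∈ Aᶜ ∧ G.Adj z' b}).ncard = 1)
    (hyz : G.Adj y z) (hy'z' : G.Adj y' z') (hzz' : z ≠ z')
    (haA : a ∈ A) (hza : G.Adj z a) (hz'a : G.Adj z' a)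
    (hay : a ≠ y) (hay' : a ≠ y') : False := by
  have haIso : ({b | b ∈ A ∧ G.Adj a b}).ncard ≠ 1 :=
    C1 hgirth hcubic hA hyA hy1 hzB hz1 hyz haA hza hay
  have hzpair : {b | b ∈ A ∧ G.Adj z b} = {y, a} := by
    obtain ⟨w, hwmem, hwy, hpair⟩ := pair_other (z_two hcubic hz1) (⟨hyA, hyz.symm⟩ :
      y ∈ {b | b ∈ A ∧ G.Adj z b})
    have : a ∈ {b | b ∈ A ∧ G.Adj z b} := ⟨haA, hza⟩
    rw [hpair] at this
    rcases this with rfl | rfl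
    · exact absurd rfl hay
    · exact hpair
  have hz'pair : {b | b ∈ A ∧ G.Adj z' b} = {y', a} := by
    obtain ⟨w, hwmem, hwy, hpair⟩ := pair_other (z_two hcubic hz'1) (⟨hy'A, hy'z'.symm⟩ :
      y' ∈ {b | b ∈ A ∧ G.Adj z' b})
    have : a ∈ {b | b ∈ A ∧ G.Adj z' b} := ⟨haA, hz'a⟩
    rw [hpair] at this
    rcases this with rfl | rfl
    · exact absurd rfl hay'
    · exact hpair
  have hyy' : y ≠ y' := by
    rintro rfl
    exact C2a hgirth hcubic hA hyA hy1 hzB hz1 hz'B hz'1 hyz hy'z' hzz'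
  have hnyy' : ¬ G.Adj y y' := by
    intro h
    exact noC5 hgirth hyz hza hz'a.symm hy'z'.symm h.symm
      (Ne.symm hay) (fun he => hz'B (he ▸ hyA)) hzz' (fun he => (he ▸ hzB) hy'A) hay'
  have hnzz' : ¬ G.Adj z z' := fun h => noTriangle hgirth h hz'a hza.symm
  obtain ⟨s, hsA, hsi, hsc, hsF, hsiso⟩ := swap hA {y, y'}
    (by rintro x (rfl | rfl); exacts [⟨hyA, hy1⟩, ⟨hy'A, hy'1⟩])
    (by rintro x (rfl | rfl) x' (rfl | rfl) h <;>
      first | exact G.irrefl h | exact hnyy' h | exact hnyy' h.symm)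
  have has : a ∈ s := hsiso a haA haIso
  have hyns : y ∉ s := fun h => Set.eq_empty_iff_forall_notMem.mp hsF y ⟨h, Or.inl rfl⟩
  have hy'ns : y' ∉ s := fun h => Set.eq_empty_iff_forall_notMem.mp hsF y' ⟨h, Or.inr rfl⟩
  have hsymm : Symmetric fun u v : V => ¬ G.Adj u v := fun u v h h' => h h'.symm
  have hi1 : IsIndep G (insert z' (s \ {a})) := by
    refine (haveI : Std.Symm fun u v : V => ¬ G.Adj u v := ⟨hsymm⟩; Set.pairwise_insert_of_symm (r := fun u v : V => ¬ G.Adj u v)).mpr ⟨hsi.mono Set.diff_subset, ?_⟩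
    rintro b ⟨hb, hba⟩ - hadj
    have : b ∈ {c | c ∈ A ∧ G.Adj z' c} := ⟨hsA hb, hadj⟩
    rw [hz'pair] at this
    rcases this with rfl | rfl
    · exact hy'ns hb
    · exact hba rfl
  have hi2 : IsIndep G (insert z (insert z' (s \ {a}))) := by
    refine (haveI : Std.Symm fun u v : V => ¬ G.Adj u v := ⟨hsymm⟩; Set.pairwise_insert_of_symm (r := fun u v : V => ¬ G.Adj u v)).mpr ⟨hi1, ?_⟩
    rintro b (rfl | ⟨hb, hba⟩) - hadj
    · exact hnzz' hadj
    · have : b ∈ {c | c ∈ A ∧ G.Adj z c} := ⟨hsA hb, hadj⟩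
      rw [hzpair] at this
      rcases this with rfl | rfl
      · exact hyns hb
      · exact hba rfl
  have hcard := indep_le hi2
  have hz'nm : z' ∉ s \ {a} := fun h => hz'B (hsA h.1)
  have hznm : z ∉ insert z' (s \ {a}) := by
    rintro (rfl | h)
    · exact hzz' rfl
    · exact hzB (hsA h.1)
  rw [Set.ncard_insert_of_notMem hznm (Set.toFinite _),
    Set.ncard_insert_of_notMem hz'nm (Set.toFinite _)] at hcard
  have := Set.ncard_diff_singleton_add_one has (Set.toFinite s)
  omega

lemma ncard_le_one_of_subsingleton {s : Set V} (h : ∀ x ∈ s, ∀ y ∈ s, x = y) :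
    s.ncard ≤ 1 := by
  by_contra hh
  push_neg at hh
  obtain ⟨x, y, hx, hy, hne⟩ := (Set.one_lt_ncard_iff (Set.toFinite _)).mp hh
  exact hne (h x hx y hy)


end Aux

/-- with `G`, `A`, `Y`, `Z` as before (`G` cubic of girth at least 16, `A` a MAI
set), let `J` be the set of edges of `G` joining `Y` to `Z` and let `H` be the graph on `J`
where `yz` and `y'z'` are adjacent iff `yy' ∈ E(G)` or `zz' ∈ E(G)`. Then the number of MAI
sets of `G` is at least `I(H)`, the number of independent sets of `H`. -/
theorem card_MAI_ge_card_indep_aux {V : Type*} [Fintype V] (G : SimpleGraph V)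
    (hcubic : IsCubic G) (hgirth : 16 ≤ G.egirth)
    (A : Set V) (hA : IsMAI G A) (Y Z : Set V)
    (hY : Y = {a ∈ A | ({b | b ∈ A ∧ G.Adj a b}).ncard = 1})
    (hZ : Z = {a ∈ Aᶜ | ({b | b ∈ Aᶜ ∧ G.Adj a b}).ncard = 1}) :
    Nat.card {s : Set {p : V × V // p.1 ∈ Y ∧ p.2 ∈ Z ∧ G.Adj p.1 p.2} //
        IsIndep (SimpleGraph.fromRel fun e e' => G.Adj e.val.1 e'.val.1 ∨ G.Adj e.val.2 e'.val.2) s}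
      ≤ Nat.card {A' : Set V // IsMAI G A'} := by
  classical
  subst hY hZ
  set Y : Set V := {a ∈ A | ({b | b ∈ A ∧ G.Adj a b}).ncard = 1} with hY
  set Z : Set V := {a ∈ Aᶜ | ({b | b ∈ Aᶜ ∧ G.Adj a b}).ncard = 1} with hZ
  have hYmem : ∀ v, v ∈ Y ↔ v ∈ A ∧ ({b | b ∈ A ∧ G.Adj v b}).ncard = 1 := fun v => Iff.rfl
  have hZmem : ∀ v, v ∈ Z ↔ v ∈ Aᶜ ∧ ({b | b ∈ Aᶜ ∧ G.Adj v b}).ncard = 1 := fun v => Iff.rfl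
  set J : Type _ := {p : V × V // p.1 ∈ Y ∧ p.2 ∈ Z ∧ G.Adj p.1 p.2} with hJ
  -- basic properties of edges of J
  have hYJ : ∀ e : J, e.val.1 ∈ A ∧ ({b | b ∈ A ∧ G.Adj e.val.1 b}).ncard = 1 :=
    fun e => (hYmem _).mp e.prop.1
  have hZJ : ∀ e : J, e.val.2 ∈ Aᶜ ∧ ({b | b ∈ Aᶜ ∧ G.Adj e.val.2 b}).ncard = 1 :=
    fun e => (hZmem _).mp e.prop.2.1
  have hadjJ : ∀ e : J, G.Adj e.val.1 e.val.2 := fun e => e.prop.2.2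
  -- J is a matching
  have hmatchY : ∀ e e' : J, e.val.1 = e'.val.1 → e = e' := by
    intro e e' h
    have h2 : e.val.2 = e'.val.2 := by
      by_contra hzz
      exact C2a hgirth hcubic hA (hYJ e).1 (hYJ e).2 (hZJ e).1 (hZJ e).2
        (hZJ e').1 (hZJ e').2 (hadjJ e) (h ▸ hadjJ e') hzz
    exact Subtype.ext (Prod.ext h h2)
  -- the second A-neighbour of the Z-endpoint of any e ∈ J is isolated in G[A]
  have hother : ∀ e : J, ∃ w, w ∈ A ∧ G.Adj e.val.2 w ∧ w ≠ e.val.1 ∧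
      ({b | b ∈ A ∧ G.Adj w b}).ncard ≠ 1 ∧
      {b | b ∈ A ∧ G.Adj e.val.2 b} = {e.val.1, w} := by
    intro e
    obtain ⟨w, hwmem, hwne, hpair⟩ := pair_other (z_two hcubic (hZJ e).2)
      (⟨(hYJ e).1, (hadjJ e).symm⟩ : e.val.1 ∈ {b | b ∈ A ∧ G.Adj e.val.2 b})
    exact ⟨w, hwmem.1, hwmem.2, hwne,
      C1 hgirth hcubic hA (hYJ e).1 (hYJ e).2 (hZJ e).1 (hZJ e).2 (hadjJ e)
        hwmem.1 hwmem.2 hwne, hpair⟩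
  have hmatchZ : ∀ e e' : J, e.val.2 = e'.val.2 → e = e' := by
    intro e e' h
    obtain ⟨w, hwA, hzw, hwne, hwiso, hpair⟩ := hother e
    have h1 : e'.val.1 ∈ {b | b ∈ A ∧ G.Adj e.val.2 b} :=
      ⟨(hYJ e').1, h ▸ (hadjJ e').symm⟩
    rw [hpair] at h1
    rcases h1 with h1 | h1
    · exact hmatchY e' e h1 |>.symm
    · exact absurd (hYJ e').2 (h1 ▸ hwiso)
  -- now the construction
  set H := SimpleGraph.fromRel
    fun e e' : J => G.Adj e.val.1 e'.val.1 ∨ G.Adj e.val.2 e'.val.2 with hH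
  have key : ∀ S : Set J, IsIndep H S →
      IsMAI G ((A \ ((fun e : J => e.val.1) '' S)) ∪ ((fun e : J => e.val.2) '' S)) := by
    intro S hS
    set fs : Set V := (fun e : J => e.val.1) '' S with hfs
    set ss : Set V := (fun e : J => e.val.2) '' S with hss
    have hSfact : ∀ e ∈ S, ∀ e' ∈ S, e ≠ e' →
        ¬ G.Adj e.val.1 e'.val.1 ∧ ¬ G.Adj e.val.2 e'.val.2 := by
      intro e he e' he' hne
      have := hS he he' hne
      rw [hH, SimpleGraph.fromRel_adj] at this
      push_neg at this
      exact (this hne).1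
    have hfsA : fs ⊆ A := by rintro v ⟨e, -, rfl⟩; exact (hYJ e).1
    have hssB : ss ⊆ Aᶜ := by rintro v ⟨e, -, rfl⟩; exact (hZJ e).1
    set A' : Set V := (A \ fs) ∪ ss with hA'
    have hsubA' : A \ fs ⊆ A' := Set.subset_union_left
    -- A' is an AI set
    have hA'AI : IsAI G A' := by
      intro a ha
      rcases ha with ⟨haA, hanfs⟩ | ⟨e, heS, rfl⟩
      · by_cases hay : ({b | b ∈ A ∧ G.Adj a b}).ncard = 1
        · obtain ⟨pa, hpa⟩ := Set.ncard_eq_one.mp hay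
          refine ncard_le_one_of_subset_singleton (w := pa) ?_
          rintro b ⟨hb, hadjb⟩
          rcases hb with ⟨hbA, -⟩ | ⟨e', he'S, rfl⟩
          · have : b ∈ {b | b ∈ A ∧ G.Adj a b} := ⟨hbA, hadjb⟩
            rw [hpa] at this; exact this
          · -- a is adjacent to an added Z-vertex
            obtain ⟨w', hw'A, hz'w', hw'ne, hw'iso, hpair'⟩ := hother e'
            have : a ∈ {b | b ∈ A ∧ G.Adj e'.val.2 b} := ⟨haA, hadjb.symm⟩
            rw [hpair'] at this
            rcases this with h | h
            · exact absurd ⟨e', he'S, h.symm⟩ hanfs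
            · exact absurd hay (h ▸ hw'iso)
        · -- a is isolated in G[A]
          have haiso := iso_empty hA.1 haA hay
          refine ncard_le_one_of_subsingleton ?_
          have hform : ∀ b ∈ {b | b ∈ A' ∧ G.Adj a b},
              ∃ e' : J, e' ∈ S ∧ b = e'.val.2 ∧ G.Adj e'.val.2 a ∧ a ≠ e'.val.1 := by
            rintro b ⟨hb, hadjb⟩
            rcases hb with ⟨hbA, -⟩ | ⟨e', he'S, rfl⟩
            · exact absurd hadjb (haiso b hbA)
            · refine ⟨e', he'S, rfl, hadjb.symm, ?_⟩
              rintro rfl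
              exact hay (hYJ e').2
          intro b hb b' hb'
          obtain ⟨e1, he1S, rfl, hadj1, hne1⟩ := hform b hb
          obtain ⟨e2, he2S, rfl, hadj2, hne2⟩ := hform b' hb'
          by_cases he12 : e1.val.2 = e2.val.2
          · exact he12
          · exact absurd (C3 hgirth hcubic hA (hYJ e1).1 (hYJ e1).2 (hYJ e2).1 (hYJ e2).2
              (hZJ e1).1 (hZJ e1).2 (hZJ e2).1 (hZJ e2).2 (hadjJ e1) (hadjJ e2) he12
              haA hadj1 hadj2 hne1 hne2) (fun h => h)
      · -- a = e.val.2 for e ∈ S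
        obtain ⟨w, hwA, hzw, hwne, hwiso, hpair⟩ := hother e
        refine ncard_le_one_of_subset_singleton (w := w) ?_
        rintro b ⟨hb, hadjb⟩
        rcases hb with ⟨hbA, hbnfs⟩ | ⟨e', he'S, rfl⟩
        · have : b ∈ {b | b ∈ A ∧ G.Adj e.val.2 b} := ⟨hbA, hadjb⟩
          rw [hpair] at this
          rcases this with h | h
          · exact absurd ⟨e, heS, h.symm⟩ hbnfs
          · exact h
        · -- two added Z-vertices adjacent
          have hnee' : e ≠ e' := fun h => G.irrefl (h ▸ hadjb)
          exact absurd hadjb (hSfact e heS e' he'S hnee').2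
    -- A' contains a maximum independent set
    obtain ⟨s, hsA, hsi, hsc, hsF, -⟩ := swap hA fs
      (by rintro v ⟨e, -, rfl⟩; exact ⟨(hYJ e).1, (hYJ e).2⟩)
      (by
        rintro v ⟨e, heS, rfl⟩ v' ⟨e', he'S, rfl⟩ hadj
        by_cases h : e = e'
        · exact G.irrefl (h ▸ hadj)
        · exact (hSfact e heS e' he'S h).1 hadj)
    have hsA' : s ⊆ A' := by
      intro x hx
      exact hsubA' ⟨hsA hx, fun hxf => Set.eq_empty_iff_forall_notMem.mp hsF x ⟨hx, hxf⟩⟩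
    -- cardinality of A'
    have hdisj : Disjoint (A \ fs) ss := by
      rw [Set.disjoint_left]
      rintro x ⟨hxA, -⟩ hxs
      exact hssB hxs hxA
    have hcard : A'.ncard = A.ncard := by
      rw [hA', Set.ncard_union_eq hdisj (Set.toFinite _) (Set.toFinite _)]
      have h1 : fs.ncard = S.ncard := Set.ncard_image_of_injOn
        (fun e he e' he' h => hmatchY e e' h)
      have h2 : ss.ncard = S.ncard := Set.ncard_image_of_injOn
        (fun e he e' he' h => hmatchZ e e' h)
      have h3 : (A \ fs).ncard = A.ncard - fs.ncard :=
        Set.ncard_diff hfsA (Set.toFinite _)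
      have h4 : fs.ncard ≤ A.ncard := Set.ncard_le_ncard hfsA (Set.toFinite _)
      omega
    exact ⟨hA'AI, ⟨s, hsA', hsi, hsc⟩,
      fun A'' h1 h2 => le_trans (hA.2.2 A'' h1 h2) hcard.ge⟩
  -- the injection
  have hinj : Function.Injective
      (fun S : {s : Set J // IsIndep H s} =>
        (⟨(A \ ((fun e : J => e.val.1) '' S.val)) ∪ ((fun e : J => e.val.2) '' S.val),
          key S.val S.prop⟩ : {A' : Set V // IsMAI G A'})) := by
    intro S1 S2 h
    simp only [Subtype.mk.injEq] at h
    refine Subtype.ext (Set.ext fun e => ?_)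
    have main : ∀ T1 T2 : Set J,
        (A \ ((fun e : J => e.val.1) '' T1)) ∪ ((fun e : J => e.val.2) '' T1) =
        (A \ ((fun e : J => e.val.1) '' T2)) ∪ ((fun e : J => e.val.2) '' T2) →
        ∀ e ∈ T1, e ∈ T2 := by
      intro T1 T2 hT e heT
      have h1 : e.val.2 ∈ (A \ ((fun e : J => e.val.1) '' T1)) ∪
          ((fun e : J => e.val.2) '' T1) := Or.inr ⟨e, heT, rfl⟩
      rw [hT] at h1
      rcases h1 with ⟨hmem, -⟩ | ⟨e', he'T, he'⟩
      · exact absurd hmem ((hZJ e).1)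
      · exact (hmatchZ e' e he') ▸ he'T
    exact ⟨main S1.val S2.val h e, main S2.val S1.val h.symm e⟩
  exact Nat.card_le_card_of_injective _ hinj
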